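/- Let A be an associative unital ℂ-algebra, m ≥ 1, u₁, …, u_m invertible elements of A, and c_{ij} ∈ ℂ* (1 ≤ i, j ≤ m) nonzero scalars such that u_i u_j = (c_{ji}/c_{ij}) u_j u_i for all i, j. For α, β ∈ ℤ^m define ĉ(α, β) = Π_{i,j} c_{ij}^{α_i β_j} and U(α) = ( Π_{i<j} c_{ij}^{α_i α_j} ) · u₁^{α₁} u₂^{α₂} ⋯ u_m^{α_m} · ( Π_i c_{ii}^{α_i(α_i − 1)/2} ). Then U(α + β) = ĉ(α, β) · U(α) · U(β) for all α, β ∈ ℤ^m. -/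

import Mathlib

/-- The twisted lattice operator
`U(α) = (Π_{i<j} c_{ij}^{α_i α_j}) · u₁^{α₁} ⋯ u_m^{α_m} · (Π_i c_{ii}^{α_i(α_i−1)/2})`,
where the ordered product is taken in increasing index order. -/
noncomputable def latticeOp {A : Type*} [Ring A] [Algebra ℂ A] {m : ℕ}
    (u : Fin m → Aˣ) (c : Fin m → Fin m → ℂˣ) (α : Fin m → ℤ) : A :=
  algebraMap ℂ A (∏ i, ∏ j ∈ Finset.Ioi i, ((c i j : ℂ)) ^ (α i * α j)) *
    (((List.finRange m).map fun i => ((u i ^ α i : Aˣ) : A)).prod) *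
    algebraMap ℂ A (∏ i, ((c i i : ℂ)) ^ (α i * (α i - 1) / 2))

private theorem twist_pow {G : Type*} [Group G] {x y z : G} (hzx : Commute z x)
    (h : x * y = z * (y * x)) : ∀ n : ℕ, x ^ n * y = z ^ n * (y * x ^ n) := by
  intro n
  induction n with
  | zero => simp
  | succ n ih =>
    calc x ^ (n + 1) * y = x * (x ^ n * y) := by rw [pow_succ', mul_assoc]
      _ = x * (z ^ n * (y * x ^ n)) := by rw [ih]
      _ = z ^ n * (x * (y * x ^ n)) := by
          rw [← mul_assoc, ← (hzx.pow_left n).eq, mul_assoc]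
      _ = z ^ n * ((z * (y * x)) * x ^ n) := by rw [← h, mul_assoc x y]
      _ = z ^ (n + 1) * (y * x ^ (n + 1)) := by
          rw [pow_succ z, pow_succ' x]
          simp only [mul_assoc]

private theorem twist_zpow1 {G : Type*} [Group G] {x y z : G} (hzx : Commute z x)
    (h : x * y = z * (y * x)) : ∀ a : ℤ, x ^ a * y = z ^ a * (y * x ^ a) := by
  have hinv : x⁻¹ * y = z⁻¹ * (y * x⁻¹) := by
    have h2 : x⁻¹ * (z * (y * x)) = y := by rw [← h, inv_mul_cancel_left]
    have h3 : z * (x⁻¹ * (y * x)) = y := by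
      rw [← mul_assoc, hzx.inv_right.eq, mul_assoc]; exact h2
    have h4 : x⁻¹ * (y * x) = z⁻¹ * y := eq_inv_mul_iff_mul_eq.mpr h3
    calc x⁻¹ * y = (x⁻¹ * (y * x)) * x⁻¹ := by group
      _ = (z⁻¹ * y) * x⁻¹ := by rw [h4]
      _ = z⁻¹ * (y * x⁻¹) := by rw [mul_assoc]
  intro a
  cases a with
  | ofNat n => simpa using twist_pow hzx h n
  | negSucc n =>
    have hc : Commute z⁻¹ x⁻¹ := hzx.inv_left.inv_right
    have := twist_pow hc hinv (n + 1)
    simpa [zpow_negSucc, inv_pow] using this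

private theorem twist_zpow {G : Type*} [Group G] {x y z : G} (hzx : Commute z x)
    (hzy : Commute z y) (h : x * y = z * (y * x)) (a b : ℤ) :
    x ^ a * y ^ b = z ^ (a * b) * (y ^ b * x ^ a) := by
  have h1 := twist_zpow1 hzx h
  have h2 : y * x ^ a = z ^ (-a) * (x ^ a * y) := by
    rw [h1 a, zpow_neg, inv_mul_cancel_left]
  have h3 := twist_zpow1 (x := y) (y := x ^ a) (z := z ^ (-a))
      (hzy.zpow_left (-a)) h2 b
  have h4 : (z ^ (-a)) ^ b = z ^ (-(a * b)) := by rw [← zpow_mul, neg_mul]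
  calc x ^ a * y ^ b = z ^ (a * b) * (z ^ (-(a * b)) * (x ^ a * y ^ b)) := by
        rw [← mul_assoc, ← zpow_add]; simp
    _ = z ^ (a * b) * (y ^ b * x ^ a) := by rw [← h4, ← h3]

section Alg
variable {A : Type*} [Ring A] [Algebra ℂ A] {m : ℕ} (u : Fin m → Aˣ)
  (c : Fin m → Fin m → ℂˣ)

private theorem swap_zpow
    (hcomm : ∀ i j, ((u i : A)) * (u j : A) =
      algebraMap ℂ A ((c j i : ℂ) / (c i j : ℂ)) * ((u j : A) * (u i : A)))
    (i j : Fin m) (a b : ℤ) :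
    ((u i ^ a : Aˣ) : A) * ((u j ^ b : Aˣ) : A) =
      algebraMap ℂ A (((c j i : ℂ) / (c i j : ℂ)) ^ (a * b)) *
        (((u j ^ b : Aˣ) : A) * ((u i ^ a : Aˣ) : A)) := by
  set w : Aˣ := Units.map (algebraMap ℂ A).toMonoidHom (c j i * (c i j)⁻¹) with hw
  have hwv : ∀ n : ℤ, ((w ^ n : Aˣ) : A)
      = algebraMap ℂ A (((c j i : ℂ) / (c i j : ℂ)) ^ n) := by
    intro n
    rw [hw, ← map_zpow, Units.coe_map]
    simp [Units.val_zpow_eq_zpow_val, div_eq_mul_inv]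
  have hwv1 : (w : A) = algebraMap ℂ A ((c j i : ℂ) / (c i j : ℂ)) := by
    simpa using hwv 1
  have hcw : ∀ k : Fin m, Commute w (u k) := by
    intro k
    apply Units.ext
    show ((w * u k : Aˣ) : A) = ((u k * w : Aˣ) : A)
    rw [Units.val_mul, Units.val_mul, hwv1]
    exact Algebra.commutes _ _
  have hrel : u i * u j = w * (u j * u i) := by
    apply Units.ext
    rw [Units.val_mul, Units.val_mul, Units.val_mul, hwv1]
    exact hcomm i j
  have key := twist_zpow (hcw i) (hcw j) hrel a b
  have := congrArg (Units.val) key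
  simpa [Units.val_mul, hwv] using this

private noncomputable def Fu (u : Fin m → Aˣ) (γ : Fin m → ℤ) (n : ℕ) : A :=
  if h : n < m then ((u ⟨n, h⟩ ^ γ ⟨n, h⟩ : Aˣ) : A) else 1

private theorem alg_comm (s : ℂ) (x : A) :
    x * algebraMap ℂ A s = algebraMap ℂ A s * x := (Algebra.commutes s x).symm

private theorem push_right
    (hcomm : ∀ i j, ((u i : A)) * (u j : A) =
      algebraMap ℂ A ((c j i : ℂ) / (c i j : ℂ)) * ((u j : A) * (u i : A)))
    (i₀ : Fin m) (a : ℤ) (β : Fin m → ℤ) :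
    ∀ l : List ℕ,
      ((u i₀ ^ a : Aˣ) : A) * (l.map (Fu u β)).prod =
        algebraMap ℂ A ((l.map fun n => if h : n < m then
            (((c ⟨n, h⟩ i₀ : ℂ)) / (c i₀ ⟨n, h⟩ : ℂ)) ^ (a * β ⟨n, h⟩) else 1).prod) *
          ((l.map (Fu u β)).prod * ((u i₀ ^ a : Aˣ) : A)) := by
  intro l
  induction l with
  | nil => simp
  | cons n t ih =>
    simp only [List.map_cons, List.prod_cons]
    by_cases h : n < m
    · simp only [Fu, dif_pos h]
      set x : A := ((u i₀ ^ a : Aˣ) : A)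
      set yj : A := ((u ⟨n, h⟩ ^ β ⟨n, h⟩ : Aˣ) : A)
      set T : A := (t.map (Fu u β)).prod
      set s₁ : ℂ := (((c ⟨n, h⟩ i₀ : ℂ)) / (c i₀ ⟨n, h⟩ : ℂ)) ^ (a * β ⟨n, h⟩)
      set s₂ : ℂ := (t.map fun n => if h : n < m then
            (((c ⟨n, h⟩ i₀ : ℂ)) / (c i₀ ⟨n, h⟩ : ℂ)) ^ (a * β ⟨n, h⟩) else 1).prod
      calc x * (yj * T) = (x * yj) * T := (mul_assoc _ _ _).symm
        _ = (algebraMap ℂ A s₁ * (yj * x)) * T := by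
            rw [swap_zpow u c hcomm i₀ ⟨n, h⟩ a (β ⟨n, h⟩)]
        _ = algebraMap ℂ A s₁ * (yj * (x * T)) := by simp only [mul_assoc]
        _ = algebraMap ℂ A s₁ * (yj * (algebraMap ℂ A s₂ * (T * x))) := by rw [ih]
        _ = algebraMap ℂ A s₁ * ((yj * algebraMap ℂ A s₂) * (T * x)) := by
            simp only [mul_assoc]
        _ = algebraMap ℂ A s₁ * ((algebraMap ℂ A s₂ * yj) * (T * x)) := by
            rw [alg_comm]
        _ = algebraMap ℂ A (s₁ * s₂) * ((yj * T) * x) := by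
            rw [map_mul]; simp only [mul_assoc]
    · simp only [Fu, dif_neg h, one_mul]
      exact ih

private theorem list_range_prod {M : Type*} [CommMonoid M] (f : ℕ → M) :
    ∀ k : ℕ, ((List.range k).map f).prod = ∏ n ∈ Finset.range k, f n := by
  intro k
  induction k with
  | zero => simp
  | succ k ih => simp [List.range_succ, Finset.prod_range_succ, ih]

private theorem range_to_Iio {M : Type*} [CommMonoid M] (i₀ : Fin m) (f : Fin m → M) :
    (∏ n ∈ Finset.range i₀.val, if h : n < m then f ⟨n, h⟩ else 1) =
      ∏ j ∈ Finset.Iio i₀, f j := by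
  refine (Finset.prod_bij' (fun (j : Fin m) (_ : j ∈ Finset.Iio i₀) => (j : ℕ))
    (fun n hn => (⟨n, lt_trans (Finset.mem_range.mp hn) i₀.isLt⟩ : Fin m))
    ?_ ?_ ?_ ?_ ?_).symm
  · intro j hj; simpa using Finset.mem_Iio.mp hj
  · intro n hn; simpa [Fin.lt_iff_val_lt_val] using Finset.mem_range.mp hn
  · intro j hj; exact Fin.eta j j.isLt
  · intro n hn; rfl
  · intro j hj; simp [j.isLt]

end Alg

private theorem tri_add (a b : ℤ) :
    (a + b) * ((a + b) - 1) / 2 = a * b + a * (a - 1) / 2 + b * (b - 1) / 2 := by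
  have key : ∀ n : ℤ, (2 : ℤ) ∣ n * (n - 1) := by
    intro n
    rcases Int.even_or_odd n with h | h
    · obtain ⟨r, hr⟩ := h; exact ⟨r * (n - 1), by rw [hr]; ring⟩
    · obtain ⟨r, hr⟩ := h; exact ⟨n * r, by rw [hr]; ring⟩
  have h1 := Int.ediv_mul_cancel (key (a + b))
  have h2 := Int.ediv_mul_cancel (key a)
  have h3 := Int.ediv_mul_cancel (key b)
  refine mul_right_cancel₀ (b := (2 : ℤ)) two_ne_zero ?_
  linear_combination h1 - h2 - h3

private theorem scalar_id {m : ℕ} (c : Fin m → Fin m → ℂˣ) (α β : Fin m → ℤ) :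
    (∏ i, ∏ j ∈ Finset.Ioi i, ((c i j : ℂ)) ^ ((α i + β i) * (α j + β j))) *
      (∏ i, ((c i i : ℂ)) ^ ((α i + β i) * ((α i + β i) - 1) / 2)) =
    (∏ i, ∏ j, ((c i j : ℂ)) ^ (α i * β j)) *
      (∏ i, ∏ j ∈ Finset.Ioi i, ((c i j : ℂ)) ^ (α i * α j)) *
      (∏ i, ((c i i : ℂ)) ^ (α i * (α i - 1) / 2)) *
      (∏ i, ∏ j ∈ Finset.Ioi i, ((c i j : ℂ)) ^ (β i * β j)) *
      (∏ i, ((c i i : ℂ)) ^ (β i * (β i - 1) / 2)) *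
      (∏ i, ∏ j ∈ Finset.Iio i, (((c j i : ℂ)) / ((c i j : ℂ))) ^ (α i * β j)) := by
  have nz : ∀ i j, (c i j : ℂ) ≠ 0 := fun i j => (c i j).ne_zero
  have hIoi : ∀ E : Fin m → Fin m → ℤ,
      (∏ i, ∏ j ∈ Finset.Ioi i, ((c i j : ℂ)) ^ E i j) =
        ∏ i, ∏ j, ((c i j : ℂ)) ^ (if i < j then E i j else 0) := by
    intro E
    refine Finset.prod_congr rfl fun i _ => ?_
    rw [show Finset.Ioi i = Finset.univ.filter (fun j => i < j) by ext j; simp,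
      Finset.prod_filter]
    refine Finset.prod_congr rfl fun j _ => ?_
    split_ifs <;> simp
  have hIio : ∀ E : Fin m → Fin m → ℤ,
      (∏ i, ∏ j ∈ Finset.Iio i, ((c i j : ℂ)) ^ E i j) =
        ∏ i, ∏ j, ((c i j : ℂ)) ^ (if j < i then E i j else 0) := by
    intro E
    refine Finset.prod_congr rfl fun i _ => ?_
    rw [show Finset.Iio i = Finset.univ.filter (fun j => j < i) by ext j; simp,
      Finset.prod_filter]
    refine Finset.prod_congr rfl fun j _ => ?_
    split_ifs <;> simp
  have hdiag : ∀ E : Fin m → ℤ,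
      (∏ i, ((c i i : ℂ)) ^ E i) =
        ∏ i, ∏ j, ((c i j : ℂ)) ^ (if j = i then E i else 0) := by
    intro E
    refine Finset.prod_congr rfl fun i _ => ?_
    rw [show (∏ j, ((c i j : ℂ)) ^ (if j = i then E i else 0)) =
        ∏ j, (if j = i then ((c i j : ℂ)) ^ E i else 1) from
      Finset.prod_congr rfl fun j _ => by split_ifs <;> simp]
    rw [Finset.prod_ite_eq' Finset.univ i (fun j => ((c i j : ℂ)) ^ E i)]
    simp
  have hsplit : (∏ i, ∏ j ∈ Finset.Iio i, (((c j i : ℂ)) / ((c i j : ℂ))) ^ (α i * β j)) =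
      (∏ i, ∏ j ∈ Finset.Iio i, ((c j i : ℂ)) ^ (α i * β j)) *
        (∏ i, ∏ j ∈ Finset.Iio i, ((c i j : ℂ)) ^ (-(α i * β j))) := by
    rw [← Finset.prod_mul_distrib]
    refine Finset.prod_congr rfl fun i _ => ?_
    rw [← Finset.prod_mul_distrib]
    refine Finset.prod_congr rfl fun j _ => ?_
    rw [div_zpow, div_eq_mul_inv, ← zpow_neg]
  have hswap : (∏ i, ∏ j ∈ Finset.Iio i, ((c j i : ℂ)) ^ (α i * β j)) =
      ∏ i, ∏ j ∈ Finset.Ioi i, ((c i j : ℂ)) ^ (α j * β i) :=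
    Finset.prod_comm' (by intro x y; simp)
  have hmerge : ∀ E F : Fin m → Fin m → ℤ,
      (∏ i, ∏ j, ((c i j : ℂ)) ^ E i j) * (∏ i, ∏ j, ((c i j : ℂ)) ^ F i j) =
        ∏ i, ∏ j, ((c i j : ℂ)) ^ (E i j + F i j) := by
    intro E F
    rw [← Finset.prod_mul_distrib]
    refine Finset.prod_congr rfl fun i _ => ?_
    rw [← Finset.prod_mul_distrib]
    refine Finset.prod_congr rfl fun j _ => ?_
    rw [zpow_add₀ (nz i j)]
  rw [hsplit, hswap, hIoi, hIoi, hIoi, hIoi, hIio, hdiag, hdiag, hdiag]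
  rw [hmerge, hmerge, hmerge, hmerge, hmerge, hmerge, hmerge]
  refine Finset.prod_congr rfl fun i _ => Finset.prod_congr rfl fun j _ => ?_
  congr 1
  rcases lt_trichotomy i j with h | h | h
  · have h1 : ¬ j < i := lt_asymm h
    have h2 : ¬ j = i := by rintro rfl; exact lt_irrefl _ h
    simp only [if_pos h, if_neg h1, if_neg h2]
    ring
  · subst h
    simp only [lt_irrefl, eq_self_iff_true, if_true, if_false]
    rw [tri_add]
    ring
  · have h1 : ¬ i < j := lt_asymm h
    have h2 : ¬ j = i := by rintro rfl; exact lt_irrefl _ h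
    simp only [if_pos h, if_neg h1, if_neg h2]
    ring

/-- Let `A` be an associative unital `ℂ`-algebra, `u₁, …, u_m` invertible elements, and
`c_{ij} ∈ ℂ*` scalars with `u_i u_j = (c_{ji}/c_{ij}) u_j u_i`.  With
`ĉ(α, β) = Π_{i,j} c_{ij}^{α_i β_j}` and `U(α)` as above, one has
`U(α + β) = ĉ(α, β) · U(α) · U(β)` for all `α, β ∈ ℤ^m`. -/
theorem latticeOp_mul
    (A : Type*) [Ring A] [Algebra ℂ A] (m : ℕ) (hm : 1 ≤ m)
    (u : Fin m → Aˣ) (c : Fin m → Fin m → ℂˣ)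
    (hcomm : ∀ i j, ((u i : A)) * (u j : A) =
      algebraMap ℂ A ((c j i : ℂ) / (c i j : ℂ)) * ((u j : A) * (u i : A))) :
    ∀ α β : Fin m → ℤ,
      latticeOp u c (α + β) =
        algebraMap ℂ A (∏ i, ∏ j, ((c i j : ℂ)) ^ (α i * β j)) *
          latticeOp u c α * latticeOp u c β := by
  intro α β
  have mvl : ∀ (s : ℂ) (x : A), x * algebraMap ℂ A s = algebraMap ℂ A s * x :=
    fun s x => (Algebra.commutes s x).symm
  set Qf : (Fin m → ℤ) → ℕ → A := fun γ k => ((List.range k).map (Fu u γ)).prod with hQf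
  have hQstep : ∀ (γ : Fin m → ℤ) (k : ℕ), Qf γ (k + 1) = Qf γ k * Fu u γ k := by
    intro γ k
    simp [hQf, List.range_succ]
  have hC : ∀ k : ℕ, Qf α k * Qf β k =
      algebraMap ℂ A (∏ i ∈ Finset.univ.filter (fun i : Fin m => (i : ℕ) < k),
        ∏ j ∈ Finset.Iio i, ((c j i : ℂ) / (c i j : ℂ)) ^ (α i * β j)) * Qf (α + β) k := by
    intro k
    induction k with
    | zero => simp [hQf]
    | succ k ih =>
      by_cases hk : k < m
      · have hfilter : Finset.univ.filter (fun i : Fin m => (i : ℕ) < k + 1)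
            = insert (⟨k, hk⟩ : Fin m)
                (Finset.univ.filter (fun i : Fin m => (i : ℕ) < k)) := by
          ext i
          simp only [Finset.mem_filter, Finset.mem_univ, true_and, Finset.mem_insert,
            Fin.ext_iff]
          omega
        have hnot : (⟨k, hk⟩ : Fin m) ∉
            Finset.univ.filter (fun i : Fin m => (i : ℕ) < k) := by simp
        have hpush := push_right u c hcomm ⟨k, hk⟩ (α ⟨k, hk⟩) β (List.range k)
        have hscal : ((List.range k).map fun n => if h : n < m then
              ((c ⟨n, h⟩ ⟨k, hk⟩ : ℂ) / (c ⟨k, hk⟩ ⟨n, h⟩ : ℂ)) ^ (α ⟨k, hk⟩ * β ⟨n, h⟩)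
              else 1).prod
            = ∏ j ∈ Finset.Iio (⟨k, hk⟩ : Fin m),
                ((c j ⟨k, hk⟩ : ℂ) / (c ⟨k, hk⟩ j : ℂ)) ^ (α ⟨k, hk⟩ * β j) := by
          rw [list_range_prod (fun n => if h : n < m then
              ((c ⟨n, h⟩ ⟨k, hk⟩ : ℂ) / (c ⟨k, hk⟩ ⟨n, h⟩ : ℂ)) ^ (α ⟨k, hk⟩ * β ⟨n, h⟩)
              else 1) k]
          exact range_to_Iio (⟨k, hk⟩ : Fin m)
            (fun j => ((c j ⟨k, hk⟩ : ℂ) / (c ⟨k, hk⟩ j : ℂ)) ^ (α ⟨k, hk⟩ * β j))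
        rw [hscal] at hpush
        have hFα : Fu u α k = ((u ⟨k, hk⟩ ^ α ⟨k, hk⟩ : Aˣ) : A) := by
          simp only [Fu, dif_pos hk]
        have hFβ : Fu u β k = ((u ⟨k, hk⟩ ^ β ⟨k, hk⟩ : Aˣ) : A) := by
          simp only [Fu, dif_pos hk]
        have hFab : Fu u (α + β) k =
            ((u ⟨k, hk⟩ ^ α ⟨k, hk⟩ : Aˣ) : A) * ((u ⟨k, hk⟩ ^ β ⟨k, hk⟩ : Aˣ) : A) := by
          simp only [Fu, dif_pos hk, Pi.add_apply, zpow_add, Units.val_mul]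
        set xα : A := ((u ⟨k, hk⟩ ^ α ⟨k, hk⟩ : Aˣ) : A)
        set xβ : A := ((u ⟨k, hk⟩ ^ β ⟨k, hk⟩ : Aˣ) : A)
        set s : ℂ := ∏ j ∈ Finset.Iio (⟨k, hk⟩ : Fin m),
          ((c j ⟨k, hk⟩ : ℂ) / (c ⟨k, hk⟩ j : ℂ)) ^ (α ⟨k, hk⟩ * β j)
        set S : ℂ := ∏ i ∈ Finset.univ.filter (fun i : Fin m => (i : ℕ) < k),
          ∏ j ∈ Finset.Iio i, ((c j i : ℂ) / (c i j : ℂ)) ^ (α i * β j)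
        calc Qf α (k + 1) * Qf β (k + 1)
            = (Qf α k * xα) * (Qf β k * xβ) := by rw [hQstep, hQstep, hFα, hFβ]
          _ = Qf α k * ((xα * Qf β k) * xβ) := by simp only [mul_assoc]
          _ = Qf α k * ((algebraMap ℂ A s * (Qf β k * xα)) * xβ) := by rw [hpush]
          _ = algebraMap ℂ A s * ((Qf α k * Qf β k) * (xα * xβ)) := by
              rw [← mul_assoc, ← mul_assoc, mvl s]
              simp only [mul_assoc]
          _ = algebraMap ℂ A s * ((algebraMap ℂ A S * Qf (α + β) k) * (xα * xβ)) := by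
              rw [ih]
          _ = algebraMap ℂ A (∏ i ∈ Finset.univ.filter (fun i : Fin m => (i : ℕ) < k + 1),
                ∏ j ∈ Finset.Iio i, ((c j i : ℂ) / (c i j : ℂ)) ^ (α i * β j)) *
                Qf (α + β) (k + 1) := by
              rw [hfilter, Finset.prod_insert hnot, hQstep, hFab, map_mul]
              simp only [mul_assoc]
              rfl
      · have hFα : Fu u α k = (1 : A) := dif_neg hk
        have hFβ : Fu u β k = (1 : A) := dif_neg hk
        have hFab : Fu u (α + β) k = (1 : A) := dif_neg hk
        have hset : Finset.univ.filter (fun i : Fin m => (i : ℕ) < k + 1)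
            = Finset.univ.filter (fun i : Fin m => (i : ℕ) < k) := by
          ext i
          simp only [Finset.mem_filter, Finset.mem_univ, true_and]
          have := i.isLt
          omega
        rw [hQstep, hQstep, hQstep, hFα, hFβ, hFab, mul_one, mul_one, mul_one, hset]
        exact ih
  have hQm : ∀ γ : Fin m → ℤ,
      Qf γ m = ((List.finRange m).map fun i => ((u i ^ γ i : Aˣ) : A)).prod := by
    intro γ
    show ((List.range m).map (Fu u γ)).prod = _
    rw [← List.map_coe_finRange_eq_range, List.map_map]
    congr 1
    apply List.map_congr_left
    intro i _
    simp [Fu, Function.comp, i.isLt]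
  have huniv : Finset.univ.filter (fun i : Fin m => (i : ℕ) < m) = Finset.univ := by
    ext i; simp [i.isLt]
  have hP : (((List.finRange m).map fun i => ((u i ^ α i : Aˣ) : A)).prod) *
      (((List.finRange m).map fun i => ((u i ^ β i : Aˣ) : A)).prod) =
      algebraMap ℂ A (∏ i, ∏ j ∈ Finset.Iio i, ((c j i : ℂ) / (c i j : ℂ)) ^ (α i * β j)) *
      (((List.finRange m).map fun i => ((u i ^ (α + β) i : Aˣ) : A)).prod) := by
    have h := hC m
    rw [hQm, hQm, hQm, huniv] at h
    exact h
  have trio : ∀ (s d : ℂ) (x : A), algebraMap ℂ A s * x * algebraMap ℂ A d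
      = algebraMap ℂ A (s * d) * x := by
    intro s d x
    rw [mul_assoc, mvl, ← mul_assoc, ← map_mul]
  have key : ∀ (e₀ e₁ e₂ : ℂ) (p q : A),
      algebraMap ℂ A e₀ * (algebraMap ℂ A e₁ * p) * (algebraMap ℂ A e₂ * q)
        = algebraMap ℂ A (e₀ * e₁ * e₂) * (p * q) := by
    intro e₀ e₁ e₂ p q
    simp only [map_mul, mul_assoc]
    rw [← mul_assoc p, mvl e₂ p, mul_assoc]
  simp only [latticeOp]
  rw [trio, trio, trio, key, hP, ← mul_assoc, ← map_mul]
  congr 1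
  congr 1
  simp only [Pi.add_apply]
  rw [scalar_id c α β]
  ring
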